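/- For any left R-module M and any right R-module N: if the character module N⁺ belongs to the flat-precover completing domain of M, then N belongs to the subinjectivity domain of M⁺. -/

import Mathlib

open CategoryTheory

universe u

variable {R : Type u} [Ring R]

/-- The submodule of relations defining the balanced tensor product `W ⊗_R M` of a
right `R`-module `W` and a left `R`-module `M` as a quotient of `W ⊗_ℤ M`. -/
abbrev tensorRel (W : Type u) [AddCommGroup W] [Module Rᵐᵒᵖ W]
    (M : Type u) [AddCommGroup M] [Module R M] : Submodule ℤ (TensorProduct ℤ W M) :=
  Submodule.span ℤ
    {x | ∃ (w : W) (r : R) (m : M), x = (MulOpposite.op r • w) ⊗ₜ[ℤ] m - w ⊗ₜ[ℤ] (r • m)}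

/-- The balanced tensor product `W ⊗_R M` over the (possibly noncommutative) ring `R`. -/
abbrev RTensor (W : Type u) [AddCommGroup W] [Module Rᵐᵒᵖ W]
    (M : Type u) [AddCommGroup M] [Module R M] : Type u :=
  TensorProduct ℤ W M ⧸ tensorRel (R := R) W M

/-- The map `W ⊗_R M → K ⊗_R M` induced by a morphism `i : W → K` of right
`R`-modules. -/
noncomputable def tensorMap {W K : Type u} [AddCommGroup W] [Module Rᵐᵒᵖ W]
    [AddCommGroup K] [Module Rᵐᵒᵖ K] (i : W →ₗ[Rᵐᵒᵖ] K)
    (M : Type u) [AddCommGroup M] [Module R M] :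
    RTensor (R := R) W M →ₗ[ℤ] RTensor (R := R) K M :=
  Submodule.mapQ _ _ (LinearMap.rTensor M i.toAddMonoidHom.toIntLinearMap) (by
    refine Submodule.span_le.2 ?_
    rintro x ⟨w, r, m, rfl⟩
    refine Submodule.mem_comap.2 (Submodule.subset_span ?_)
    refine ⟨i w, r, m, ?_⟩
    refine (LinearMap.map_sub _ _ _).trans ?_
    simp [LinearMap.rTensor_tmul, map_smul])

/-- `M` is a flat left `R`-module: tensoring with `M` preserves injectivity of
morphisms of right `R`-modules. -/
def IsFlat (M : Type u) [AddCommGroup M] [Module R M] : Prop :=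
  ∀ (W K : Type u) [AddCommGroup W] [Module Rᵐᵒᵖ W] [AddCommGroup K] [Module Rᵐᵒᵖ K]
    (i : W →ₗ[Rᵐᵒᵖ] K), Function.Injective i → Function.Injective (tensorMap (R := R) i M)

/-- `N` belongs to the flat-precover completing domain `𝔉⁻¹(M)` of `M`:
every morphism `M ⟶ N` factors through a flat module. -/
def FlatDom (M N : ModuleCat.{u} R) : Prop :=
  ∀ f : M ⟶ N, ∃ (F : ModuleCat.{u} R) (h : M ⟶ F) (k : F ⟶ N),
    IsFlat (R := R) ↥F ∧ h ≫ k = f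

/-- The character module `L⁺ = Hom_ℤ(L, ℚ/ℤ)`. -/
abbrev Character (L : Type u) [AddCommGroup L] : Type u := L →+ AddCircle (1 : ℚ)

/-- The left `R`-module structure on the character module of a right `R`-module. -/
instance charLeftModule (L : Type u) [AddCommGroup L] [Module Rᵐᵒᵖ L] :
    Module R (Character L) where
  smul r c := c.comp (DistribMulAction.toAddMonoidHom L (MulOpposite.op r))
  one_smul c := AddMonoidHom.ext fun x => by
    show c (MulOpposite.op (1 : R) • x) = c x
    simp
  mul_smul a b c := AddMonoidHom.ext fun x => by
    show c (MulOpposite.op (a * b) • x) = c (MulOpposite.op b • MulOpposite.op a • x)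
    rw [MulOpposite.op_mul, mul_smul]
  smul_zero _ := AddMonoidHom.ext fun _ => rfl
  smul_add _ _ _ := AddMonoidHom.ext fun _ => rfl
  add_smul a b c := AddMonoidHom.ext fun x => by
    show c (MulOpposite.op (a + b) • x) = c (MulOpposite.op a • x) + c (MulOpposite.op b • x)
    rw [MulOpposite.op_add, add_smul, map_add]
  zero_smul c := AddMonoidHom.ext fun x => by
    show c (MulOpposite.op (0 : R) • x) = 0
    rw [MulOpposite.op_zero, zero_smul, map_zero]

/-- The right `R`-module structure on the character module of a left `R`-module. -/
instance charRightModule (L : Type u) [AddCommGroup L] [Module R L] :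
    Module Rᵐᵒᵖ (Character L) where
  smul s c := c.comp (DistribMulAction.toAddMonoidHom L s.unop)
  one_smul c := AddMonoidHom.ext fun x => by
    show c ((1 : Rᵐᵒᵖ).unop • x) = c x
    simp
  mul_smul a b c := AddMonoidHom.ext fun x => by
    show c ((a * b).unop • x) = c (b.unop • a.unop • x)
    rw [MulOpposite.unop_mul, mul_smul]
  smul_zero _ := AddMonoidHom.ext fun _ => rfl
  smul_add _ _ _ := AddMonoidHom.ext fun _ => rfl
  add_smul a b c := AddMonoidHom.ext fun x => by
    show c ((a + b).unop • x) = c (a.unop • x) + c (b.unop • x)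
    rw [MulOpposite.unop_add, add_smul, map_add]
  zero_smul c := AddMonoidHom.ext fun x => by
    show c ((0 : Rᵐᵒᵖ).unop • x) = 0
    rw [MulOpposite.unop_zero, zero_smul, map_zero]

theorem stmt_17 (M : ModuleCat.{u} R) (N : Type u) [AddCommGroup N] [Module Rᵐᵒᵖ N]
    (h : FlatDom M (ModuleCat.of R (Character N))) :
    ∀ (E : Type u) [AddCommGroup E] [Module Rᵐᵒᵖ E] (i : N →ₗ[Rᵐᵒᵖ] E),
      Function.Injective i → ∀ f : N →ₗ[Rᵐᵒᵖ] Character ↥M,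
        ∃ g : E →ₗ[Rᵐᵒᵖ] Character ↥M, g.comp i = f := by
  intro E _ _ i hi f
  -- The adjoint morphism `M ⟶ N⁺`.
  let fhat : ↥M →ₗ[R] Character N :=
    { toFun := fun m =>
        { toFun := fun n => f n m
          map_zero' := by simp
          map_add' := fun n n' => by simp }
      map_add' := fun m m' => AddMonoidHom.ext fun n => by simp
      map_smul' := fun r m => AddMonoidHom.ext fun n => by
        show f n (r • m) = f (MulOpposite.op r • n) m
        rw [f.map_smul]; rfl }
  obtain ⟨F, hM, k, hflat, hcomp⟩ := h (ModuleCat.ofHom fhat : M ⟶ ModuleCat.of R (Character N))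
  let k' : ↥F →ₗ[R] Character N := k.hom
  have hk : ∀ m : ↥M, k' (hM m) = fhat m := fun m =>
    congrArg (fun (φ : M ⟶ ModuleCat.of R (Character N)) => φ m) hcomp
  -- The adjoint of `k : F ⟶ N⁺`, a map `N → F⁺`.
  let khat : N →ₗ[Rᵐᵒᵖ] Character ↥F :=
    { toFun := fun n =>
        { toFun := fun x => k' x n
          map_zero' := by show k' 0 n = 0; rw [map_zero]; rfl
          map_add' := fun x x' => by
            show k' (x + x') n = k' x n + k' x' n
            rw [map_add]; rfl }
      map_add' := fun n n' => AddMonoidHom.ext fun x => map_add (k' x) n n'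
      map_smul' := fun r n => AddMonoidHom.ext fun x => by
        show k' x (MulOpposite.op r.unop • n) = k' (r.unop • x) n
        rw [k'.map_smul]
        rfl }
  have khat_rel : ∀ (r : R) (n : N) (x : ↥F),
      khat (MulOpposite.op r • n) x = khat n (r • x) := fun r n x =>
    congrArg (fun c : Character ↥F => c x) (khat.map_smul (MulOpposite.op r) n)
  -- The character on `N ⊗_ℤ F` induced by `khat`.
  let b : N →ₗ[ℤ] ↥F →ₗ[ℤ] AddCircle (1 : ℚ) :=
    { toFun := fun n => (khat n).toIntLinearMap
      map_add' := fun n n' => LinearMap.ext fun x => by simp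
      map_smul' := fun z n => LinearMap.ext fun x => by simp }
  let c0 : TensorProduct ℤ N ↥F →ₗ[ℤ] AddCircle (1 : ℚ) := TensorProduct.lift b
  have hc0tmul : ∀ (n : N) (x : ↥F), c0 (n ⊗ₜ[ℤ] x) = khat n x := fun n x =>
    TensorProduct.lift.tmul n x
  have hc0 : tensorRel (R := R) N ↥F ≤ LinearMap.ker c0 := by
    refine Submodule.span_le.2 ?_
    rintro x ⟨n, r, y, rfl⟩
    simp only [SetLike.mem_coe, LinearMap.mem_ker, map_sub, sub_eq_zero, hc0tmul]
    exact khat_rel r n y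
  let chat : RTensor (R := R) N ↥F →ₗ[ℤ] AddCircle (1 : ℚ) :=
    Submodule.liftQ _ c0 hc0
  -- Extend `chat` along the injective map `N ⊗ F → E ⊗ F`.
  have hinj : Function.Injective (tensorMap (R := R) i ↥F) := hflat N E i hi
  obtain ⟨D, hD⟩ := (Module.Baer.of_divisible (AddCircle (1 : ℚ))).extension_property_addMonoidHom
    (tensorMap (R := R) i ↥F).toAddMonoidHom hinj chat.toAddMonoidHom
  have hD' : ∀ t, D (tensorMap (R := R) i ↥F t) = chat t := fun t =>
    congrArg (fun (φ : RTensor (R := R) N ↥F →+ AddCircle (1 : ℚ)) => φ t) hD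
  have key : ∀ (n : N) (x : ↥F),
      D (Submodule.Quotient.mk ((i n) ⊗ₜ[ℤ] x)) = k' x n := by
    intro n x
    have ht : tensorMap (R := R) i ↥F (Submodule.Quotient.mk (n ⊗ₜ[ℤ] x)) =
        Submodule.Quotient.mk ((i n) ⊗ₜ[ℤ] x) := by
      simp only [tensorMap, Submodule.mapQ_apply, LinearMap.rTensor_tmul]
      rfl
    rw [← ht, hD']
    show c0 (n ⊗ₜ[ℤ] x) = k' x n
    rw [hc0tmul]
    rfl
  -- The desired extension `g : E → M⁺`.
  let gfun : E → Character ↥M := fun e =>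
    { toFun := fun m => D (Submodule.Quotient.mk (e ⊗ₜ[ℤ] (hM m)))
      map_zero' := by simp
      map_add' := fun m m' => by
        show D (Submodule.Quotient.mk (e ⊗ₜ[ℤ] (hM (m + m')))) = _
        rw [map_add, TensorProduct.tmul_add, Submodule.Quotient.mk_add, map_add] }
  refine ⟨{ toFun := gfun
            map_add' := fun e e' => AddMonoidHom.ext fun m => by
              show D (Submodule.Quotient.mk ((e + e') ⊗ₜ[ℤ] (hM m))) =
                D (Submodule.Quotient.mk (e ⊗ₜ[ℤ] (hM m))) +
                  D (Submodule.Quotient.mk (e' ⊗ₜ[ℤ] (hM m)))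
              rw [TensorProduct.add_tmul, Submodule.Quotient.mk_add, map_add]
            map_smul' := fun r e => AddMonoidHom.ext fun m => by
              show D (Submodule.Quotient.mk ((MulOpposite.op r.unop • e) ⊗ₜ[ℤ] (hM m))) =
                D (Submodule.Quotient.mk (e ⊗ₜ[ℤ] (hM (r.unop • m))))
              rw [map_smul (ConcreteCategory.hom hM)]
              congr 1
              rw [Submodule.Quotient.eq]
              exact Submodule.subset_span ⟨e, r.unop, hM m, rfl⟩ }, ?_⟩
  refine LinearMap.ext fun n => AddMonoidHom.ext fun m => ?_
  show D (Submodule.Quotient.mk ((i n) ⊗ₜ[ℤ] (hM m))) = f n m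
  rw [key n (hM m), hk m]
  rfl
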